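/- Let O ⊆ ℝ^d be open, let u : ℝ^d → ℝ be three times continuously differentiable on O, let σ > 0, and define y := u − σ L̄u on O. Then for every ε > 0 and every x ∈ O, φ(x)²/φ_ε(x) − σ L̄φ_ε(x) ≤ ‖∇y(x)‖. -/

import Mathlib

open Real MeasureTheory
open scoped BigOperators RealInnerProductSpace

/-- Partial derivative in the `i`-th coordinate direction. -/
noncomputable def pd {d : ℕ} (i : Fin d) (f : EuclideanSpace ℝ (Fin d) → ℝ)
    (x : EuclideanSpace ℝ (Fin d)) : ℝ :=
  fderiv ℝ f x (EuclideanSpace.single i 1)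

/-- The (Gaussian) Ornstein–Uhlenbeck operator `L̄f(x) = Δf(x) − ⟨x, ∇f(x)⟩`. -/
noncomputable def OU {d : ℕ} (f : EuclideanSpace ℝ (Fin d) → ℝ)
    (x : EuclideanSpace ℝ (Fin d)) : ℝ :=
  (∑ i, pd i (pd i f) x) - ⟪x, gradient f x⟫

/-- `φ(x) = ‖∇u(x)‖`. -/
noncomputable def phi {d : ℕ} (u : EuclideanSpace ℝ (Fin d) → ℝ)
    (x : EuclideanSpace ℝ (Fin d)) : ℝ :=
  ‖gradient u x‖

/-- `φ_ε(x) = √(ε² + ‖∇u(x)‖²)`. -/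
noncomputable def phiEps {d : ℕ} (ε : ℝ) (u : EuclideanSpace ℝ (Fin d) → ℝ)
    (x : EuclideanSpace ℝ (Fin d)) : ℝ :=
  Real.sqrt (ε ^ 2 + ‖gradient u x‖ ^ 2)

variable {d : ℕ}

lemma pd_eq_grad (i : Fin d) (f : EuclideanSpace ℝ (Fin d) → ℝ) (x : EuclideanSpace ℝ (Fin d)) :
    pd i f x = gradient f x i := by
  rw [pd, gradient]
  have : fderiv ℝ f x = InnerProductSpace.toDual ℝ _ ((InnerProductSpace.toDual ℝ _).symm (fderiv ℝ f x)) := by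
    rw [LinearIsometryEquiv.apply_symm_apply]
  rw [this, InnerProductSpace.toDual_apply_apply, EuclideanSpace.inner_single_right]
  simp

lemma norm_grad_sq (f : EuclideanSpace ℝ (Fin d) → ℝ) (x : EuclideanSpace ℝ (Fin d)) :
    ‖gradient f x‖ ^ 2 = ∑ i, (pd i f x) ^ 2 := by
  rw [EuclideanSpace.norm_eq, Real.sq_sqrt (by positivity)]
  exact Finset.sum_congr rfl fun i _ => by rw [pd_eq_grad]; simp

lemma inner_grad (f : EuclideanSpace ℝ (Fin d) → ℝ) (x : EuclideanSpace ℝ (Fin d)) :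
    ⟪x, gradient f x⟫ = ∑ i, x i * pd i f x := by
  rw [PiLp.inner_apply]
  exact Finset.sum_congr rfl fun i _ => by rw [pd_eq_grad]; simp [mul_comm]

lemma pd_congr {O : Set (EuclideanSpace ℝ (Fin d))} (hO : IsOpen O)
    {x : EuclideanSpace ℝ (Fin d)} (hx : x ∈ O) {f g : EuclideanSpace ℝ (Fin d) → ℝ}
    (h : ∀ z ∈ O, f z = g z) (i : Fin d) : pd i f x = pd i g x := by
  have : f =ᶠ[nhds x] g := Filter.eventuallyEq_of_mem (hO.mem_nhds hx) h
  rw [pd, pd, this.fderiv_eq]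

lemma pd_of_hasFDerivAt {f : EuclideanSpace ℝ (Fin d) → ℝ} {x : EuclideanSpace ℝ (Fin d)}
    {L : EuclideanSpace ℝ (Fin d) →L[ℝ] ℝ} (h : HasFDerivAt f L x) (i : Fin d) :
    pd i f x = L (EuclideanSpace.single i 1) := by rw [pd, h.fderiv]

lemma contDiffOn_pd {n : ℕ∞} {f : EuclideanSpace ℝ (Fin d) → ℝ} (hO : IsOpen O)
    (hf : ContDiffOn ℝ (n + 1) f O) (i : Fin d) : ContDiffOn ℝ n (pd i f) O := by
  have h1 : ContDiffOn ℝ n (fderiv ℝ f) O := hf.fderiv_of_isOpen hO le_rfl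
  exact h1.clm_apply contDiffOn_const

lemma diffAt_of_contDiffOn {n : ℕ∞} {f : EuclideanSpace ℝ (Fin d) → ℝ} (hO : IsOpen O)
    (hx : x ∈ O) (hf : ContDiffOn ℝ (n + 1) f O) : DifferentiableAt ℝ f x :=
  ((hf.differentiableOn (by simp)).differentiableAt (hO.mem_nhds hx))

lemma pd_comm {f : EuclideanSpace ℝ (Fin d) → ℝ} (hO : IsOpen O) (hx : x ∈ O)
    (hf : ContDiffOn ℝ 2 f O) (i j : Fin d) : pd i (pd j f) x = pd j (pd i f) x := by
  have hat : ContDiffAt ℝ 2 f x := hf.contDiffAt (hO.mem_nhds hx)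
  have hsymm := hat.isSymmSndFDerivAt (by simp [minSmoothness_of_isRCLikeNormedField])
  have hdf : DifferentiableAt ℝ (fderiv ℝ f) x := by
    have : ContDiffOn ℝ 1 (fderiv ℝ f) O := hf.fderiv_of_isOpen hO le_rfl
    exact (this.differentiableOn (by simp)).differentiableAt (hO.mem_nhds hx)
  have key : ∀ a b : Fin d, pd a (pd b f) x =
      fderiv ℝ (fderiv ℝ f) x (EuclideanSpace.single a 1) (EuclideanSpace.single b 1) := by
    intro a b
    have : pd a (pd b f) x
        = fderiv ℝ (fun z => (fderiv ℝ f z) (EuclideanSpace.single b 1)) x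
            (EuclideanSpace.single a 1) := rfl
    rw [this, fderiv_clm_apply hdf (differentiableAt_const _)]
    simp
  rw [key, key, hsymm]


section main
variable {O : Set (EuclideanSpace ℝ (Fin d))} {u : EuclideanSpace ℝ (Fin d) → ℝ} {ε : ℝ}

lemma phiEps_eq (ε : ℝ) (u : EuclideanSpace ℝ (Fin d) → ℝ) :
    phiEps ε u = fun z => Real.sqrt (ε ^ 2 + ∑ j, (pd j u z) ^ 2) := by
  funext z; rw [phiEps, norm_grad_sq]

lemma hasFDerivAt_s (hO : IsOpen O) (hu : ContDiffOn ℝ 3 u O)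
    {z : EuclideanSpace ℝ (Fin d)} (hz : z ∈ O) :
    HasFDerivAt (fun w => ε ^ 2 + ∑ j, (pd j u w) ^ 2)
      (∑ j, (2 * pd j u z) • fderiv ℝ (pd j u) z) z := by
  have hu2 : ContDiffOn ℝ ((1:ℕ∞) + 1 + 1) u O := hu.of_le (by norm_num)
  have hdiff : ∀ j : Fin d, DifferentiableAt ℝ (pd j u) z := fun j => by
    have := contDiffOn_pd (n := (1:ℕ∞) + 1) hO hu2 j
    exact ((this.of_le (m := 1) (by norm_num)).differentiableOn (by simp)).differentiableAt (hO.mem_nhds hz)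
  apply HasFDerivAt.const_add
  apply HasFDerivAt.fun_sum
  intro j _
  have h := ((hdiff j).hasFDerivAt).mul ((hdiff j).hasFDerivAt)
  have : (2 * pd j u z) • fderiv ℝ (pd j u) z
      = pd j u z • fderiv ℝ (pd j u) z + pd j u z • fderiv ℝ (pd j u) z := by
    rw [two_mul, add_smul]
  rw [this]
  simpa [pow_two, Pi.mul_def] using h

lemma pd_phiEps (hO : IsOpen O) (hu : ContDiffOn ℝ 3 u O) (hε : 0 < ε)
    {z : EuclideanSpace ℝ (Fin d)} (hz : z ∈ O) (i : Fin d) :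
    pd i (phiEps ε u) z =
      (∑ j, pd j u z * pd i (pd j u) z) / Real.sqrt (ε ^ 2 + ∑ j, (pd j u z) ^ 2) := by
  have hne : (ε ^ 2 + ∑ j, (pd j u z) ^ 2) ≠ 0 := by positivity
  have h := (hasFDerivAt_s (ε := ε) hO hu hz).sqrt hne
  rw [phiEps_eq, pd_of_hasFDerivAt h]
  have hS : Real.sqrt (ε ^ 2 + ∑ j, (pd j u z) ^ 2) ≠ 0 := by positivity
  simp only [ContinuousLinearMap.smul_apply, ContinuousLinearMap.sum_apply, smul_eq_mul]
  rw [Finset.mul_sum, Finset.sum_div]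
  apply Finset.sum_congr rfl
  intro j _
  have : (fderiv ℝ (pd j u) z) (EuclideanSpace.single i 1) = pd i (pd j u) z := rfl
  rw [this]
  field_simp
end main
section main2
variable {O : Set (EuclideanSpace ℝ (Fin d))} {u : EuclideanSpace ℝ (Fin d) → ℝ} {ε : ℝ}
  {x : EuclideanSpace ℝ (Fin d)}

lemma pd_pd_phiEps (hO : IsOpen O) (hu : ContDiffOn ℝ 3 u O) (hε : 0 < ε)
    (hx : x ∈ O) (i : Fin d) :
    pd i (pd i (phiEps ε u)) x =
      (∑ j, (pd i (pd j u) x * pd i (pd j u) x + pd j u x * pd i (pd i (pd j u)) x))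
        / Real.sqrt (ε ^ 2 + ∑ j, (pd j u x) ^ 2)
      - (∑ j, pd j u x * pd i (pd j u) x) ^ 2
        / (Real.sqrt (ε ^ 2 + ∑ j, (pd j u x) ^ 2)) ^ 3 := by
  have hcongr : pd i (pd i (phiEps ε u)) x
      = pd i (fun z => (∑ j, pd j u z * pd i (pd j u) z)
          * (Real.sqrt (ε ^ 2 + ∑ j, (pd j u z) ^ 2))⁻¹) x := by
    apply pd_congr hO hx (i := i)
    intro z hz
    rw [pd_phiEps hO hu hε hz i, div_eq_mul_inv]
  rw [hcongr]
  have hu2 : ContDiffOn ℝ ((1:ℕ∞) + 1 + 1) u O := hu.of_le (by norm_num)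
  have hpd1 : ∀ j : Fin d, ContDiffOn ℝ ((1:ℕ∞) + 1) (pd j u) O :=
    fun j => contDiffOn_pd hO hu2 j
  have hdiff1 : ∀ j : Fin d, DifferentiableAt ℝ (pd j u) x := fun j =>
    (((hpd1 j).of_le (m := 1) (by norm_num)).differentiableOn (by simp)).differentiableAt (hO.mem_nhds hx)
  have hdiff2 : ∀ j : Fin d, DifferentiableAt ℝ (pd i (pd j u)) x := fun j => by
    have := contDiffOn_pd (n := 1) hO (hpd1 j) i
    exact (this.differentiableOn (by simp)).differentiableAt (hO.mem_nhds hx)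
  have hN : HasFDerivAt (fun z => ∑ j, pd j u z * pd i (pd j u) z)
      (∑ j, (pd j u x • fderiv ℝ (pd i (pd j u)) x + pd i (pd j u) x • fderiv ℝ (pd j u) x)) x :=
    HasFDerivAt.fun_sum fun j _ => (hdiff1 j).hasFDerivAt.mul (hdiff2 j).hasFDerivAt
  have hne : (ε ^ 2 + ∑ j, (pd j u x) ^ 2) ≠ 0 := by positivity
  have hS : HasFDerivAt (fun z => Real.sqrt (ε ^ 2 + ∑ j, (pd j u z) ^ 2))
      ((1 / (2 * Real.sqrt (ε ^ 2 + ∑ j, (pd j u x) ^ 2)))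
        • (∑ j, (2 * pd j u x) • fderiv ℝ (pd j u) x)) x :=
    (hasFDerivAt_s (ε := ε) hO hu hx).sqrt hne
  have hSne : Real.sqrt (ε ^ 2 + ∑ j, (pd j u x) ^ 2) ≠ 0 := by positivity
  have hinv : HasFDerivAt (fun z => (Real.sqrt (ε ^ 2 + ∑ j, (pd j u z) ^ 2))⁻¹)
      ((-((Real.sqrt (ε ^ 2 + ∑ j, (pd j u x) ^ 2)) ^ 2)⁻¹)
        • ((1 / (2 * Real.sqrt (ε ^ 2 + ∑ j, (pd j u x) ^ 2)))
        • (∑ j, (2 * pd j u x) • fderiv ℝ (pd j u) x))) x :=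
    (hasDerivAt_inv hSne).comp_hasFDerivAt x hS
  have hF := hN.mul hinv
  rw [pd_of_hasFDerivAt (f := fun z => (∑ j, pd j u z * pd i (pd j u) z)
    * (Real.sqrt (ε ^ 2 + ∑ j, (pd j u z) ^ 2))⁻¹) hF i]
  simp only [ContinuousLinearMap.add_apply, ContinuousLinearMap.smul_apply,
    ContinuousLinearMap.sum_apply, smul_eq_mul]
  have e1 : ∀ j : Fin d, (fderiv ℝ (pd j u) x) (EuclideanSpace.single i 1) = pd i (pd j u) x :=
    fun j => rfl
  have e2 : ∀ j : Fin d,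
      (fderiv ℝ (pd i (pd j u)) x) (EuclideanSpace.single i 1) = pd i (pd i (pd j u)) x :=
    fun j => rfl
  simp only [e1, e2]
  have r1 : (∑ j, 2 * pd j u x * pd i (pd j u) x) = 2 * ∑ j, pd j u x * pd i (pd j u) x := by
    rw [Finset.mul_sum]; exact Finset.sum_congr rfl fun j _ => by ring
  rw [r1]
  have r2 : (∑ j, (pd j u x * pd i (pd i (pd j u)) x + pd i (pd j u) x * pd i (pd j u) x))
      = ∑ j, (pd i (pd j u) x * pd i (pd j u) x + pd j u x * pd i (pd i (pd j u)) x) :=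
    Finset.sum_congr rfl fun j _ => by ring
  rw [r2]
  generalize hSg : Real.sqrt (ε ^ 2 + ∑ j, (pd j u x) ^ 2) = S at hSne ⊢
  field_simp
  ring
end main2



section main3
variable {O : Set (EuclideanSpace ℝ (Fin d))} {u y : EuclideanSpace ℝ (Fin d) → ℝ} {σ : ℝ}
  {x : EuclideanSpace ℝ (Fin d)}

lemma pd_y (hO : IsOpen O) (hu : ContDiffOn ℝ 3 u O)
    (hy : ∀ z ∈ O, y z = u z - σ * OU u z) (hx : x ∈ O) (j : Fin d) :
    pd j y x = (1 + σ) * pd j u x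
      - σ * ((∑ i, pd i (pd i (pd j u)) x) - ∑ i, x i * pd i (pd j u) x) := by
  have hu2 : ContDiffOn ℝ 2 u O := hu.of_le (by norm_num)
  have hu21 : ContDiffOn ℝ ((2:ℕ∞) + 1) u O := hu.of_le (by norm_num)
  have hpdu2 : ∀ i : Fin d, ContDiffOn ℝ 2 (pd i u) O := fun i => by
    have := contDiffOn_pd (n := 2) hO hu21 i
    exact this.of_le (by norm_num)
  have hcongr : pd j y x = pd j
      (fun z => u z - σ * ((∑ i, pd i (pd i u) z) - ∑ i, z i * pd i u z)) x := by
    apply pd_congr hO hx (i := j)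
    intro z hz
    rw [hy z hz, OU, inner_grad]
  rw [hcongr]
  have hudiff : DifferentiableAt ℝ u x :=
    ((hu2.of_le (m := 1) (by norm_num)).differentiableOn (by simp)).differentiableAt (hO.mem_nhds hx)
  have hdiff2 : ∀ i : Fin d, DifferentiableAt ℝ (pd i (pd i u)) x := fun i => by
    have := contDiffOn_pd (n := 1) hO ((hpdu2 i).of_le (by norm_num)) i
    exact (this.differentiableOn (by simp)).differentiableAt (hO.mem_nhds hx)
  have hdiff1 : ∀ i : Fin d, DifferentiableAt ℝ (pd i u) x := fun i =>
    (((hpdu2 i).of_le (m := 1) (by norm_num)).differentiableOn (by simp)).differentiableAt (hO.mem_nhds hx)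
  have hsum2 : HasFDerivAt (fun z => ∑ i, pd i (pd i u) z)
      (∑ i, fderiv ℝ (pd i (pd i u)) x) x :=
    HasFDerivAt.fun_sum fun i _ => (hdiff2 i).hasFDerivAt
  have hsum1 : HasFDerivAt (fun z : EuclideanSpace ℝ (Fin d) => ∑ i, z i * pd i u z)
      (∑ i, (((x : EuclideanSpace ℝ (Fin d)) i) • fderiv ℝ (pd i u) x
        + pd i u x • (EuclideanSpace.proj i : EuclideanSpace ℝ (Fin d) →L[ℝ] ℝ))) x := by
    apply HasFDerivAt.fun_sum
    intro i _
    exact ((EuclideanSpace.proj i : EuclideanSpace ℝ (Fin d) →L[ℝ] ℝ).hasFDerivAt).mul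
      (hdiff1 i).hasFDerivAt
  have hg : HasFDerivAt
      (fun z => u z - σ * ((∑ i, pd i (pd i u) z) - ∑ i, z i * pd i u z))
      (fderiv ℝ u x - σ • ((∑ i, fderiv ℝ (pd i (pd i u)) x)
        - ∑ i, (((x : EuclideanSpace ℝ (Fin d)) i) • fderiv ℝ (pd i u) x
          + pd i u x • (EuclideanSpace.proj i : EuclideanSpace ℝ (Fin d) →L[ℝ] ℝ)))) x :=
    hudiff.hasFDerivAt.sub ((hsum2.sub hsum1).const_mul σ)
  rw [pd_of_hasFDerivAt hg j]
  simp only [ContinuousLinearMap.sub_apply, ContinuousLinearMap.smul_apply,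
    ContinuousLinearMap.sum_apply, ContinuousLinearMap.add_apply, smul_eq_mul]
  have e0 : (fderiv ℝ u x) (EuclideanSpace.single j 1) = pd j u x := rfl
  have e2 : ∀ i : Fin d, (fderiv ℝ (pd i (pd i u)) x) (EuclideanSpace.single j 1)
      = pd i (pd i (pd j u)) x := by
    intro i
    have a1 : (fderiv ℝ (pd i (pd i u)) x) (EuclideanSpace.single j 1)
        = pd j (pd i (pd i u)) x := rfl
    have a2 : pd j (pd i (pd i u)) x = pd i (pd j (pd i u)) x :=
      (pd_comm hO hx (hpdu2 i) j i).symm ▸ rfl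
    have a3 : pd i (pd j (pd i u)) x = pd i (pd i (pd j u)) x := by
      apply pd_congr hO hx (i := i)
      intro z hz
      exact pd_comm hO hz hu2 j i
    rw [a1, pd_comm hO hx (hpdu2 i) j i, a3]
  have e1 : ∀ i : Fin d, (fderiv ℝ (pd i u) x) (EuclideanSpace.single j 1)
      = pd i (pd j u) x := by
    intro i
    have a1 : (fderiv ℝ (pd i u) x) (EuclideanSpace.single j 1) = pd j (pd i u) x := rfl
    rw [a1, pd_comm hO hx hu2 j i]
  have e3 : ∀ i : Fin d, (EuclideanSpace.proj i : EuclideanSpace ℝ (Fin d) →L[ℝ] ℝ)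
      (EuclideanSpace.single j 1) = if j = i then 1 else 0 := by
    intro i
    simp [EuclideanSpace.single_apply, eq_comm]
  simp only [e0, e2, e1, e3]
  rw [Finset.sum_add_distrib]
  have : (∑ i, pd i u x * if j = i then (1:ℝ) else 0) = pd j u x := by
    rw [Finset.sum_congr rfl (fun i _ => by rw [mul_ite, mul_one, mul_zero]),
      Finset.sum_ite_eq]
    simp
  rw [this]
  ring
end main3


set_option maxHeartbeats 1000000 in
theorem phiEps_ou_key_inequality {d : ℕ} (O : Set (EuclideanSpace ℝ (Fin d)))
    (hO : IsOpen O) (u : EuclideanSpace ℝ (Fin d) → ℝ) (hu : ContDiffOn ℝ 3 u O)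
    (σ : ℝ) (hσ : 0 < σ) (y : EuclideanSpace ℝ (Fin d) → ℝ)
    (hy : ∀ x ∈ O, y x = u x - σ * OU u x) (ε : ℝ) (hε : 0 < ε) :
    ∀ x ∈ O,
      (phi u x) ^ 2 / phiEps ε u x - σ * OU (phiEps ε u) x ≤ ‖gradient y x‖ := by
  intro x hx
  set S : ℝ := Real.sqrt (ε ^ 2 + ∑ j, (pd j u x) ^ 2) with hSdef
  set A : ℝ := ∑ j, (pd j u x) ^ 2 with hAdef
  set P : ℝ := ∑ i, ∑ j, (pd i (pd j u) x) ^ 2 with hPdef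
  set W : ℝ := ∑ i, ∑ j, pd j u x * pd i (pd i (pd j u)) x with hWdef
  set X : ℝ := ∑ i, (x i) * (∑ j, pd j u x * pd i (pd j u) x) with hXdef
  set R : ℝ := ∑ i, (∑ j, pd j u x * pd i (pd j u) x) ^ 2 with hRdef
  set B : ℝ := ∑ j, pd j u x * pd j y x with hBdef
  set NB : ℝ := Real.sqrt (∑ j, (pd j y x) ^ 2) with hNBdef
  have hA0 : 0 ≤ A := Finset.sum_nonneg fun j _ => sq_nonneg _
  have hP0 : 0 ≤ P := Finset.sum_nonneg fun i _ => Finset.sum_nonneg fun j _ => sq_nonneg _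
  have hS_pos : 0 < S := Real.sqrt_pos.2 (by positivity)
  have hNB0 : 0 ≤ NB := Real.sqrt_nonneg _
  have hS2 : S ^ 2 = ε ^ 2 + A := Real.sq_sqrt (by positivity)
  -- ‖∇y‖ and φ, φε values
  have hny : ‖gradient y x‖ = NB := by
    rw [hNBdef, ← norm_grad_sq, Real.sqrt_sq (norm_nonneg _)]
  have hphiE : phiEps ε u x = S := by rw [phiEps, norm_grad_sq]
  have hphi2 : phi u x ^ 2 = A := by rw [phi, norm_grad_sq]
  -- OU of phiEps
  have hOU : OU (phiEps ε u) x = (P + W) / S - R / S ^ 3 - X / S := by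
    rw [OU, inner_grad]
    have h2 : (∑ i, pd i (pd i (phiEps ε u)) x)
        = (∑ i, ((∑ j, (pd i (pd j u) x * pd i (pd j u) x + pd j u x * pd i (pd i (pd j u)) x)) / S
          - (∑ j, pd j u x * pd i (pd j u) x) ^ 2 / S ^ 3)) :=
      Finset.sum_congr rfl fun i _ => pd_pd_phiEps hO hu hε hx i
    have h1 : (∑ i, x i * pd i (phiEps ε u) x)
        = ∑ i, x i * ((∑ j, pd j u x * pd i (pd j u) x) / S) :=
      Finset.sum_congr rfl fun i _ => by rw [pd_phiEps hO hu hε hx i]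
    rw [h2, h1, Finset.sum_sub_distrib]
    have h3 : (∑ i, (∑ j, (pd i (pd j u) x * pd i (pd j u) x
        + pd j u x * pd i (pd i (pd j u)) x)) / S) = (P + W) / S := by
      rw [← Finset.sum_div]
      congr 1
      rw [hPdef, hWdef, ← Finset.sum_add_distrib]
      exact Finset.sum_congr rfl fun i _ => by
        rw [← Finset.sum_add_distrib]
        exact Finset.sum_congr rfl fun j _ => by ring
    have h4 : (∑ i, (∑ j, pd j u x * pd i (pd j u) x) ^ 2 / S ^ 3) = R / S ^ 3 := by
      rw [← Finset.sum_div, hRdef]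
    have h5 : (∑ i, x i * ((∑ j, pd j u x * pd i (pd j u) x) / S)) = X / S := by
      rw [hXdef, Finset.sum_div]
      exact Finset.sum_congr rfl fun i _ => by rw [mul_div_assoc]
    rw [h3, h4, h5]
  -- the commutation identity summed against ∇u
  have hWX : σ * (W - X) = (1 + σ) * A - B := by
    have hb : ∀ j : Fin d, pd j y x = (1 + σ) * pd j u x
        - σ * ((∑ i, pd i (pd i (pd j u)) x) - ∑ i, x i * pd i (pd j u) x) :=
      fun j => pd_y hO hu hy hx j
    have hBeq : B = (1 + σ) * A - σ * (∑ j, pd j u x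
        * ((∑ i, pd i (pd i (pd j u)) x) - ∑ i, x i * pd i (pd j u) x)) := by
      rw [hBdef, hAdef, Finset.mul_sum, Finset.mul_sum, ← Finset.sum_sub_distrib]
      exact Finset.sum_congr rfl fun j _ => by rw [hb j]; ring
    have hswap : (∑ j, pd j u x
        * ((∑ i, pd i (pd i (pd j u)) x) - ∑ i, x i * pd i (pd j u) x)) = W - X := by
      have step1 : (∑ j, pd j u x
          * ((∑ i, pd i (pd i (pd j u)) x) - ∑ i, x i * pd i (pd j u) x))
          = ∑ j, ∑ i, (pd j u x * pd i (pd i (pd j u)) x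
              - pd j u x * (x i * pd i (pd j u) x)) := by
        apply Finset.sum_congr rfl
        intro j _
        rw [mul_sub, Finset.mul_sum, Finset.mul_sum, ← Finset.sum_sub_distrib]
      rw [step1, Finset.sum_comm, hWdef, hXdef, ← Finset.sum_sub_distrib]
      apply Finset.sum_congr rfl
      intro i _
      rw [Finset.sum_sub_distrib, Finset.mul_sum]
      congr 1
      apply Finset.sum_congr rfl
      intro j _
      ring
    rw [hBeq, hswap]; ring
  -- Cauchy–Schwarz bounds
  have hR : R ≤ A * P := by
    rw [hRdef, hPdef, Finset.mul_sum]
    apply Finset.sum_le_sum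
    intro i _
    calc (∑ j, pd j u x * pd i (pd j u) x) ^ 2
        ≤ (∑ j, (pd j u x) ^ 2) * ∑ j, (pd i (pd j u) x) ^ 2 :=
          Finset.sum_mul_sq_le_sq_mul_sq _ _ _
      _ = A * ∑ j, (pd i (pd j u) x) ^ 2 := rfl
  have hB : B ≤ Real.sqrt A * NB := by
    have h1 : B ^ 2 ≤ A * ∑ j, (pd j y x) ^ 2 := Finset.sum_mul_sq_le_sq_mul_sq _ _ _
    calc B ≤ |B| := le_abs_self B
      _ = Real.sqrt (B ^ 2) := (Real.sqrt_sq_eq_abs B).symm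
      _ ≤ Real.sqrt (A * ∑ j, (pd j y x) ^ 2) := Real.sqrt_le_sqrt h1
      _ = Real.sqrt A * NB := by rw [Real.sqrt_mul hA0]
  have hsA : Real.sqrt A ≤ S := Real.sqrt_le_sqrt (by nlinarith)
  -- assemble
  rw [hny, hphiE, hphi2, hOU]
  clear_value S A P W X R B NB
  have hA_le : A ≤ S ^ 2 := by nlinarith [sq_nonneg ε]
  have key : A / S - σ * ((P + W) / S - R / S ^ 3 - X / S)
      = (B - σ * A) / S + (σ * R / S ^ 3 - σ * P / S) := by
    have hSne : S ≠ 0 := ne_of_gt hS_pos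
    linear_combination (-1 / S) * hWX
  rw [key]
  have h1 : σ * R / S ^ 3 - σ * P / S ≤ 0 := by
    rw [sub_nonpos, div_le_div_iff₀ (pow_pos hS_pos 3) hS_pos]
    have hRS : R ≤ S ^ 2 * P := by nlinarith [mul_le_mul_of_nonneg_right hA_le hP0]
    nlinarith [mul_le_mul_of_nonneg_left hRS (mul_nonneg hσ.le hS_pos.le)]
  have h2 : (B - σ * A) / S ≤ NB := by
    have hBA : B - σ * A ≤ B := by nlinarith [mul_nonneg hσ.le hA0]
    have hBNS : B ≤ NB * S := by
      have := mul_le_mul_of_nonneg_right hsA hNB0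
      nlinarith
    rw [div_le_iff₀ hS_pos]
    linarith
  linarith
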